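/- arXiv:1811.03858 — 5 statements merged into one kernel-verified Lean document; each statement's English description precedes it below -/
import Mathlib

section
/- For d = 1 and λ ∈ (0,1), define Λ(s) = ln((λe^{−s} + e^{s})/(1+λ)) for s ≥ (1/2)ln λ and Λ(s) = ln(2√λ/(1+λ)) for s < (1/2)ln λ. Then for every x ∈ [0,1], sup_{s∈ℝ}(sx − Λ(s)) = (x/2)ln λ − ln(2√λ/(1+λ)) + (1+x)ln√(1+x) + (1−x)ln√(1−x). -/
open Real Filter

/-- Weighted AM-GM key inequality for the Legendre transform. -/
lemma key_ineq (lam x : ℝ) (h0 : 0 < lam) (hx0 : 0 ≤ x) (hx1 : x < 1) (s : ℝ) :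
    s * x + (1 - x) / 2 * Real.log lam - (1 + x) / 2 * Real.log ((1 + x) / 2)
      - (1 - x) / 2 * Real.log ((1 - x) / 2)
      ≤ Real.log (lam * Real.exp (-s) + Real.exp s) := by
  set p := (1 + x) / 2 with hp_def
  set q := (1 - x) / 2 with hq_def
  have hp : 0 < p := by rw [hp_def]; linarith
  have hq : 0 < q := by rw [hq_def]; linarith
  have hpq : p + q = 1 := by rw [hp_def, hq_def]; ring
  have hx' : x = p - q := by rw [hp_def, hq_def]; ring
  have hA : 0 < Real.exp s := Real.exp_pos s
  have hB : 0 < lam * Real.exp (-s) := by positivity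
  have amgm := Real.geom_mean_le_arith_mean2_weighted hp.le hq.le
      (div_pos hA hp).le (div_pos hB hq).le hpq
  have h1 : p * (Real.exp s / p) + q * (lam * Real.exp (-s) / q)
      = lam * Real.exp (-s) + Real.exp s := by
    field_simp
    ring
  rw [h1] at amgm
  have hgm : 0 < (Real.exp s / p) ^ p * (lam * Real.exp (-s) / q) ^ q := by positivity
  have hlog := Real.log_le_log hgm amgm
  rw [Real.log_mul (by positivity) (by positivity),
      Real.log_rpow (div_pos hA hp), Real.log_rpow (div_pos hB hq),
      Real.log_div hA.ne' hp.ne', Real.log_div hB.ne' hq.ne', Real.log_exp,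
      Real.log_mul h0.ne' (Real.exp_ne_zero _), Real.log_exp] at hlog
  have h2 : s * x = p * s - q * s := by rw [hx']; ring
  linarith

theorem stmt6 (lam : ℝ) (h0 : 0 < lam) (h1 : lam < 1) (x : ℝ) (hx0 : 0 ≤ x) (hx1 : x ≤ 1) :
    IsLUB {v : ℝ | ∃ s : ℝ, v = s * x -
        (if (1 / 2) * Real.log lam ≤ s
         then Real.log ((lam * Real.exp (-s) + Real.exp s) / (1 + lam))
         else Real.log (2 * Real.sqrt lam / (1 + lam)))}
      (x / 2 * Real.log lam - Real.log (2 * Real.sqrt lam / (1 + lam))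
        + (1 + x) * Real.log (Real.sqrt (1 + x))
        + (1 - x) * Real.log (Real.sqrt (1 - x))) := by
  have h1l : (0:ℝ) < 1 + lam := by linarith
  have hsl : 0 < Real.sqrt lam := Real.sqrt_pos.mpr h0
  have hc : Real.log (2 * Real.sqrt lam / (1 + lam))
      = Real.log 2 + Real.log lam / 2 - Real.log (1 + lam) := by
    rw [Real.log_div (by positivity) h1l.ne', Real.log_mul (by norm_num) hsl.ne',
        Real.log_sqrt h0.le]
  rcases lt_or_eq_of_le hx1 with hx1' | hx1'
  · -- case x < 1
    have hxp : 0 < 1 + x := by linarith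
    have hxq : 0 < 1 - x := by linarith
    have hM : x / 2 * Real.log lam - Real.log (2 * Real.sqrt lam / (1 + lam))
        + (1 + x) * Real.log (Real.sqrt (1 + x)) + (1 - x) * Real.log (Real.sqrt (1 - x))
        = - ((1 - x) / 2) * Real.log lam + (1 + x) / 2 * Real.log ((1 + x) / 2)
          + (1 - x) / 2 * Real.log ((1 - x) / 2) + Real.log (1 + lam) := by
      rw [hc, Real.log_sqrt hxp.le, Real.log_sqrt hxq.le,
          Real.log_div hxp.ne' (by norm_num : (2:ℝ) ≠ 0),
          Real.log_div hxq.ne' (by norm_num : (2:ℝ) ≠ 0)]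
      ring
    constructor
    · rintro v ⟨s, rfl⟩
      split_ifs with hs
      · have hk := key_ineq lam x h0 hx0 hx1' s
        have hpos : 0 < lam * Real.exp (-s) + Real.exp s := by positivity
        rw [Real.log_div hpos.ne' h1l.ne', hM]
        linarith
      · push_neg at hs
        have hk := key_ineq lam x h0 hx0 hx1' ((1/2) * Real.log lam)
        have hes : Real.exp ((1/2) * Real.log lam) = Real.sqrt lam := by
          rw [show (1/2) * Real.log lam = Real.log (Real.sqrt lam) by
            rw [Real.log_sqrt h0.le]; ring, Real.exp_log hsl]
        have hsum : lam * Real.exp (-((1/2) * Real.log lam)) + Real.exp ((1/2) * Real.log lam)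
            = 2 * Real.sqrt lam := by
          rw [Real.exp_neg, hes]
          have hmul : Real.sqrt lam * Real.sqrt lam = lam := Real.mul_self_sqrt h0.le
          field_simp
          linarith
        rw [hsum, Real.log_mul (by norm_num) hsl.ne', Real.log_sqrt h0.le] at hk
        rw [hM, hc]
        have hsx : s * x ≤ (1/2) * Real.log lam * x :=
          mul_le_mul_of_nonneg_right hs.le hx0
        linarith
    · intro b hb
      set t := lam * (1 + x) / (1 - x) with ht_def
      have ht : 0 < t := by rw [ht_def]; positivity
      set E := Real.sqrt t with hE_def
      have hE : 0 < E := Real.sqrt_pos.mpr ht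
      have hE2 : E ^ 2 = t := Real.sq_sqrt ht.le
      set s := Real.log E with hs_def
      have hes : Real.exp s = E := Real.exp_log hE
      have hslog : s = (Real.log lam + Real.log (1 + x) - Real.log (1 - x)) / 2 := by
        rw [hs_def, hE_def, Real.log_sqrt ht.le, ht_def,
            Real.log_div (by positivity) hxq.ne', Real.log_mul h0.ne' hxp.ne']
      have hscond : (1/2) * Real.log lam ≤ s := by
        rw [hslog]
        have hll : Real.log (1 - x) ≤ Real.log (1 + x) := Real.log_le_log hxq (by linarith)
        linarith
      have hsum : lam * Real.exp (-s) + Real.exp s = (2 * lam / (1 - x)) / E := by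
        rw [Real.exp_neg, hes]
        have h2 : lam + E ^ 2 = 2 * lam / (1 - x) := by
          rw [hE2, ht_def]; field_simp; ring
        rw [← h2]; field_simp
      apply hb
      refine ⟨s, ?_⟩
      rw [if_pos hscond, hsum, hc,
          Real.log_div (by positivity) h1l.ne',
          Real.log_div (by positivity) hE.ne',
          Real.log_div (by positivity) hxq.ne',
          Real.log_mul (by norm_num : (2:ℝ) ≠ 0) h0.ne', ← hs_def,
          Real.log_sqrt hxp.le, Real.log_sqrt hxq.le, hslog]
      ring
  · -- case x = 1
    subst hx1'
    have hM1 : (1:ℝ) / 2 * Real.log lam - Real.log (2 * Real.sqrt lam / (1 + lam))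
        + (1 + 1) * Real.log (Real.sqrt (1 + 1)) + (1 - 1) * Real.log (Real.sqrt (1 - 1))
        = Real.log (1 + lam) := by
      rw [hc, show (1:ℝ) + 1 = 2 by norm_num, show (1:ℝ) - 1 = 0 by norm_num,
          Real.sqrt_zero, Real.log_zero, Real.log_sqrt (by norm_num : (0:ℝ) ≤ 2)]
      ring
    rw [hM1]
    constructor
    · rintro v ⟨s, rfl⟩
      split_ifs with hs
      · have hpos : 0 < lam * Real.exp (-s) + Real.exp s := by positivity
        rw [Real.log_div hpos.ne' h1l.ne']
        have hle : s ≤ Real.log (lam * Real.exp (-s) + Real.exp s) := by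
          calc s = Real.log (Real.exp s) := (Real.log_exp s).symm
            _ ≤ _ := Real.log_le_log (Real.exp_pos s)
                (by nlinarith [Real.exp_pos (-s)])
        linarith
      · push_neg at hs
        rw [hc]
        have hl2 : 0 < Real.log 2 := Real.log_pos (by norm_num)
        linarith
    · intro b hb
      have h2 : Tendsto (fun s : ℝ => lam * Real.exp (-2 * s) + 1) atTop (nhds 1) := by
        have hlin : Tendsto (fun s : ℝ => -2 * s) atTop atBot :=
          (tendsto_const_mul_atBot_of_neg (by norm_num : (-2:ℝ) < 0)).mpr tendsto_id
        have hexp : Tendsto (fun s : ℝ => Real.exp (-2 * s)) atTop (nhds 0) :=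
          Real.tendsto_exp_atBot.comp hlin
        have := (hexp.const_mul lam).add_const 1
        simpa using this
      have hlogt : Tendsto (fun s : ℝ => Real.log (lam * Real.exp (-2 * s) + 1))
          atTop (nhds 0) := by
        have := (Real.continuousAt_log (by norm_num : (1:ℝ) ≠ 0)).tendsto.comp h2
        simpa [Function.comp_def] using this
      have htend : Tendsto
          (fun s : ℝ => Real.log (1 + lam) - Real.log (lam * Real.exp (-2 * s) + 1))
          atTop (nhds (Real.log (1 + lam))) := by
        have := (tendsto_const_nhds :
            Tendsto (fun _ : ℝ => Real.log (1 + lam)) atTop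
              (nhds (Real.log (1 + lam)))).sub hlogt
        simpa using this
      refine le_of_tendsto htend ?_
      filter_upwards [eventually_ge_atTop ((1/2) * Real.log lam)] with s hs
      have hkey : Real.log (1 + lam) - Real.log (lam * Real.exp (-2 * s) + 1)
          = s * 1 - Real.log ((lam * Real.exp (-s) + Real.exp s) / (1 + lam)) := by
        have hexp : Real.exp (-s) = Real.exp s * Real.exp (-2 * s) := by
          rw [← Real.exp_add]; ring_nf
        have hfac : lam * Real.exp (-s) + Real.exp s
            = Real.exp s * (lam * Real.exp (-2 * s) + 1) := by rw [hexp]; ring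
        have hpos2 : 0 < lam * Real.exp (-2 * s) + 1 := by positivity
        rw [Real.log_div (by positivity) h1l.ne', hfac,
            Real.log_mul (Real.exp_ne_zero s) hpos2.ne', Real.log_exp]
        ring
      rw [hkey]
      exact hb ⟨s, by rw [if_pos hs]⟩
end

section
/- For d = 1 and λ ∈ (0,1), define Λ*(x) = (x/2)ln λ − ln(2√λ/(1+λ)) + (1+x)ln√(1+x) + (1−x)ln√(1−x) for x ∈ [0,1]. Then Λ*(x) ≥ 0 with equality iff x = (1−λ)/(1+λ). -/
lemma kl_term (a p : ℝ) (ha : 0 ≤ a) (hp : 0 < p) :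
    a - p ≤ a * (Real.log a - Real.log p) ∧
    (a * (Real.log a - Real.log p) = a - p ↔ a = p) := by
  rcases ha.eq_or_lt with h | h
  · simp [← h]
    constructor
    · linarith
    · constructor
      · intro h2; linarith
      · intro h2; linarith
  · have hpa : 0 < p / a := div_pos hp h
    have hlog : Real.log (p / a) ≤ p / a - 1 := Real.log_le_sub_one_of_pos hpa
    have hld : Real.log (p / a) = Real.log p - Real.log a :=
      Real.log_div (ne_of_gt hp) (ne_of_gt h)
    constructor
    · rw [hld] at hlog
      have := mul_le_mul_of_nonneg_left hlog (le_of_lt h)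
      have harw : a * (p / a - 1) = p - a := by field_simp
      nlinarith
    · constructor
      · intro heq
        by_contra hne
        have hne1 : p / a ≠ 1 := by
          intro hh
          apply hne
          field_simp at hh
          linarith
        have hstrict : Real.log (p / a) < p / a - 1 :=
          Real.log_lt_sub_one_of_pos hpa hne1
        rw [hld] at hstrict
        have := mul_lt_mul_of_pos_left hstrict h
        have harw : a * (p / a - 1) = p - a := by field_simp
        nlinarith
      · intro heq; rw [heq]; ring

theorem stmt7 (lam x : ℝ) (h0 : 0 < lam) (h1 : lam < 1) (hx0 : 0 ≤ x) (hx1 : x ≤ 1) :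
    0 ≤ x / 2 * Real.log lam - Real.log (2 * Real.sqrt lam / (1 + lam))
        + (1 + x) * Real.log (Real.sqrt (1 + x))
        + (1 - x) * Real.log (Real.sqrt (1 - x)) ∧
    (x / 2 * Real.log lam - Real.log (2 * Real.sqrt lam / (1 + lam))
        + (1 + x) * Real.log (Real.sqrt (1 + x))
        + (1 - x) * Real.log (Real.sqrt (1 - x)) = 0 ↔ x = (1 - lam) / (1 + lam)) := by
  have hx1' : (0:ℝ) < 1 + x := by linarith
  have hx2' : (0:ℝ) ≤ 1 - x := by linarith
  have hlam1 : (0:ℝ) < 1 + lam := by linarith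
  set a : ℝ := (1 + x) / 2 with ha_def
  set b : ℝ := (1 - x) / 2 with hb_def
  set p : ℝ := 1 / (1 + lam) with hp_def
  set q : ℝ := lam / (1 + lam) with hq_def
  have hap : 0 < a := by rw [ha_def]; linarith
  have hb0 : 0 ≤ b := by rw [hb_def]; linarith
  have hpp : 0 < p := by rw [hp_def]; positivity
  have hqp : 0 < q := by rw [hq_def]; positivity
  -- log computations
  have hla : Real.log a = Real.log (1 + x) - Real.log 2 := by
    rw [ha_def, Real.log_div (ne_of_gt hx1') two_ne_zero]
  have hlp : Real.log p = - Real.log (1 + lam) := by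
    rw [hp_def, Real.log_div one_ne_zero (ne_of_gt hlam1), Real.log_one]; ring
  have hlq : Real.log q = Real.log lam - Real.log (1 + lam) := by
    rw [hq_def, Real.log_div (ne_of_gt h0) (ne_of_gt hlam1)]
  have hlb : b * Real.log b = b * (Real.log (1 - x) - Real.log 2) := by
    rcases hx2'.eq_or_lt with h | h
    · have hb : b = 0 := by rw [hb_def, ← h]; ring
      rw [hb]; ring
    · rw [hb_def, Real.log_div (ne_of_gt h) two_ne_zero]
  have hs1 : Real.log (Real.sqrt (1 + x)) = Real.log (1 + x) / 2 :=
    Real.log_sqrt (le_of_lt hx1')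
  have hs2 : Real.log (Real.sqrt (1 - x)) = Real.log (1 - x) / 2 :=
    Real.log_sqrt hx2'
  have hsl : Real.log (Real.sqrt lam) = Real.log lam / 2 :=
    Real.log_sqrt (le_of_lt h0)
  have hsl0 : Real.sqrt lam ≠ 0 := by positivity
  have hden : Real.log (2 * Real.sqrt lam / (1 + lam))
      = Real.log 2 + Real.log lam / 2 - Real.log (1 + lam) := by
    rw [Real.log_div (by positivity) (ne_of_gt hlam1),
        Real.log_mul two_ne_zero hsl0, hsl]
  -- key identity
  have hL : x / 2 * Real.log lam - Real.log (2 * Real.sqrt lam / (1 + lam))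
        + (1 + x) * Real.log (Real.sqrt (1 + x))
        + (1 - x) * Real.log (Real.sqrt (1 - x))
      = a * (Real.log a - Real.log p) + b * (Real.log b - Real.log q) := by
    rw [hden, hs1, hs2]
    have : a * (Real.log a - Real.log p) + b * (Real.log b - Real.log q)
        = a * Real.log a - a * Real.log p + (b * Real.log b - b * Real.log q) := by ring
    rw [this, hlb, hla, hlp, hlq, ha_def, hb_def]
    ring
  have h1 := kl_term a p (le_of_lt hap) hpp
  have h2 := kl_term b q hb0 hqp
  have hsum : a - p + (b - q) = 0 := by
    rw [ha_def, hb_def, hp_def, hq_def]; field_simp; ring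
  constructor
  · rw [hL]; linarith [h1.1, h2.1]
  · rw [hL]
    constructor
    · intro h
      have e1 : a * (Real.log a - Real.log p) = a - p := by linarith [h1.1, h2.1]
      have hap2 : a = p := h1.2.mp e1
      rw [ha_def, hp_def] at hap2
      rw [eq_div_iff (ne_of_gt hlam1)]
      field_simp at hap2
      linarith
    · intro h
      have hapq : a = p := by
        rw [ha_def, hp_def, h]; field_simp; ring
      have hbq : b = q := by
        rw [hb_def, hq_def, h]; field_simp; ring
      have e1 := h1.2.mpr hapq
      have e2 := h2.2.mpr hbq
      linarith
end

section
/- Let Z be a ℤ-valued random walk path of length n from α to β (nearest-neighbor steps ±1). Denote by P_{n,β}(α) the number of such paths, and by Q_{n,β}(α) the number of such paths γ with γ_i ≥ min(α,β) for all 0 ≤ i ≤ n. Then Q_{n,β}(α) ≥ ((|α−β| ∨ 1)/n)·P_{n,β}(α) for all n ≥ 1. -/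
open scoped Classical

/-- Position at time `k` of the nearest-neighbor path on `ℤ` starting at `α`
whose steps are `+1` (for `true`) or `-1` (for `false`) encoded by `σ`. -/
def pathPos (n : ℕ) (α : ℤ) (σ : Fin n → Bool) (k : ℕ) : ℤ :=
  α + ∑ l : Fin n, if (l : ℕ) < k then (if σ l then 1 else -1) else 0

noncomputable section

def stepf (n : ℕ) (σ : Fin n → Bool) (l : ℕ) : ℤ :=
  if h : 0 < n then (if σ ⟨l % n, Nat.mod_lt l h⟩ then 1 else -1) else 0

def psum (n : ℕ) (σ : Fin n → Bool) (k : ℕ) : ℤ :=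
  ∑ l ∈ Finset.range k, stepf n σ l

lemma stepf_period (n : ℕ) (σ : Fin n → Bool) (l : ℕ) :
    stepf n σ (l + n) = stepf n σ l := by
  simp [stepf, Nat.add_mod_right]

lemma stepf_cases (n : ℕ) (hn : 0 < n) (σ : Fin n → Bool) (l : ℕ) :
    stepf n σ l = 1 ∨ stepf n σ l = -1 := by
  simp only [stepf, dif_pos hn]
  by_cases h : σ ⟨l % n, Nat.mod_lt l hn⟩ <;> simp [h]

lemma psum_succ (n : ℕ) (σ : Fin n → Bool) (k : ℕ) :
    psum n σ (k + 1) = psum n σ k + stepf n σ k := Finset.sum_range_succ _ _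

lemma psum_add_n (n : ℕ) (σ : Fin n → Bool) (k : ℕ) :
    psum n σ (k + n) = psum n σ k + psum n σ n := by
  induction k with
  | zero => simp [psum]
  | succ k ih =>
      have : k + 1 + n = (k + n) + 1 := by omega
      rw [this, psum_succ, ih, stepf_period, psum_succ]
      ring

lemma psum_add_mul (n : ℕ) (σ : Fin n → Bool) (k q : ℕ) :
    psum n σ (k + n * q) = psum n σ k + q * psum n σ n := by
  induction q with
  | zero => simp
  | succ q ih =>
      have : k + n * (q + 1) = (k + n * q) + n := by ring
      rw [this, psum_add_n, ih]
      push_cast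
      ring

lemma pathPos_eq (n : ℕ) (α : ℤ) (σ : Fin n → Bool) (k : ℕ) (hk : k ≤ n) :
    pathPos n α σ k = α + psum n σ k := by
  have hn : 0 < n ∨ n = 0 := by omega
  rcases hn with hn | rfl
  · unfold pathPos psum
    congr 1
    have hterm : ∀ l : Fin n, (if (l : ℕ) < k then (if σ l then 1 else -1) else 0)
        = (fun j => if j < k then stepf n σ j else 0) (l : ℕ) := by
      intro l
      simp only [stepf, dif_pos hn, Nat.mod_eq_of_lt l.isLt, Fin.eta]
    rw [Finset.sum_congr rfl (fun l _ => hterm l),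
      Fin.sum_univ_eq_sum_range (fun j => if j < k then stepf n σ j else 0)]
    rw [← Finset.sum_filter]
    have hfil : (Finset.range n).filter (fun l => l < k) = Finset.range k := by
      ext l
      simp only [Finset.mem_filter, Finset.mem_range]
      omega
    rw [hfil]
  · interval_cases k
    simp [pathPos, psum]

end

section Core
variable (n : ℕ) (σ : Fin n → Bool)

lemma psum_ivt (hn : 0 < n) (c : ℤ) (a : ℕ) :
    ∀ d : ℕ, psum n σ a ≤ c → c ≤ psum n σ (a + d) → ∃ j ≤ d, psum n σ (a + j) = c := by
  intro d
  induction d with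
  | zero => intro h1 h2; exact ⟨0, le_refl _, le_antisymm h1 (by simpa using h2)⟩
  | succ d ih =>
      intro h1 h2
      by_cases hc : c ≤ psum n σ (a + d)
      · obtain ⟨j, hj, hjc⟩ := ih h1 hc
        exact ⟨j, by omega, hjc⟩
      · push_neg at hc
        refine ⟨d + 1, le_refl _, ?_⟩
        have hstep := stepf_cases n hn σ (a + d)
        have := psum_succ n σ (a + d)
        have : psum n σ (a + (d+1)) = psum n σ (a + d) + stepf n σ (a + d) := by
          rw [show a + (d+1) = (a+d)+1 by omega, psum_succ]
        omega

lemma core_cycle (hn : 0 < n) (hb : 0 ≤ psum n σ n) :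
    (max (psum n σ n) 1).toNat ≤
      ((Finset.range n).filter
        (fun r => ∀ k ≤ n, psum n σ r ≤ psum n σ (r + k))).card := by
  set b : ℤ := psum n σ n with hbdef
  obtain ⟨k₀, hk₀n, hk₀min⟩ := Finset.exists_min_image (Finset.range n) (fun k => psum n σ k)
    ⟨0, Finset.mem_range.mpr hn⟩
  rw [Finset.mem_range] at hk₀n
  set m : ℤ := psum n σ k₀ with hmdef
  have hmin : ∀ j < n, m ≤ psum n σ j := fun j hj => hk₀min j (Finset.mem_range.mpr hj)
  -- global lower bound
  have hglob : ∀ k : ℕ, m + (k / n : ℕ) * b ≤ psum n σ k := by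
    intro k
    have hk : k = k % n + n * (k / n) := (Nat.mod_add_div k n).symm
    conv_rhs => rw [hk]
    rw [psum_add_mul]
    have := hmin (k % n) (Nat.mod_lt k hn)
    linarith
  rcases eq_or_lt_of_le hb with hb0 | hb1
  -- case b = 0
  · have hmax : (max b 1).toNat = 1 := by rw [← hb0]; simp
    rw [hmax]
    rw [Nat.one_le_iff_ne_zero, ← Nat.pos_iff_ne_zero, Finset.card_pos]
    refine ⟨k₀, Finset.mem_filter.mpr ⟨Finset.mem_range.mpr hk₀n, ?_⟩⟩
    intro k hk
    by_cases hkn : k₀ + k < n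
    · exact hmin _ hkn
    · have h1 : k₀ + k = (k₀ + k - n) + n := by omega
      rw [h1, psum_add_n, ← hbdef, ← hb0, add_zero]
      exact hmin _ (by omega)
  -- case b ≥ 1
  · have hmax : (max b 1).toNat = b.toNat := by
      rw [max_eq_left (by omega)]
    rw [hmax]
    set L : ℕ → ℕ := fun i => Nat.findGreatest (fun k => psum n σ k = m + i) (n + n * i)
      with hLdef
    -- existence of a witness
    have hwit : ∀ i : ℕ, ∃ w ≤ n + n * i, psum n σ w = m + i := by
      intro i
      have h1 : psum n σ k₀ ≤ m + i := by omega
      have h2 : m + i ≤ psum n σ (k₀ + n * i) := by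
        rw [psum_add_mul, ← hbdef]
        have : (i : ℤ) * 1 ≤ (i : ℤ) * b :=
          mul_le_mul_of_nonneg_left (by omega) (by positivity)
        linarith
      obtain ⟨j, hj, hjc⟩ := psum_ivt n σ hn (m + i) k₀ (n * i) h1 h2
      exact ⟨k₀ + j, by omega, hjc⟩
    have hbound : ∀ i k : ℕ, psum n σ k = m + i → k ≤ n + n * i := by
      intro i k hk
      have hg := hglob k
      rw [hk] at hg
      have h1 : ((k / n : ℕ) : ℤ) * b ≤ (i : ℤ) := by linarith
      have h2 : ((k / n : ℕ) : ℤ) * 1 ≤ ((k / n : ℕ) : ℤ) * b :=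
        mul_le_mul_of_nonneg_left (by omega) (by positivity)
      have h3 : (k / n : ℕ) ≤ i := by omega
      have h5 : n * (k / n) ≤ n * i := Nat.mul_le_mul_left n h3
      have h6 := Nat.mod_add_div k n
      have h7 : k % n < n := Nat.mod_lt k hn
      omega
    have hLspec : ∀ i : ℕ, psum n σ (L i) = m + i := by
      intro i
      obtain ⟨w, hw1, hw2⟩ := hwit i
      exact Nat.findGreatest_spec (P := fun k => psum n σ k = m + i) hw1 hw2
    have hgt : ∀ i : ℕ, ∀ j : ℕ, L i < j → m + i < psum n σ j := by
      intro i j hj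
      by_contra hle
      push_neg at hle
      have hne : ∀ j' : ℕ, L i < j' → ¬ (psum n σ j' = m + i) := by
        intro j' hj' hPj'
        exact Nat.findGreatest_is_greatest hj' (hbound i j' hPj') hPj'
      rcases eq_or_lt_of_le hle with heq | hlt
      · exact hne j hj heq
      · set E : ℕ := (m + i - psum n σ j).toNat with hE
        have h2 : m + i ≤ psum n σ (j + n * E) := by
          rw [psum_add_mul, ← hbdef]
          have hEi : (E : ℤ) = m + i - psum n σ j := by
            rw [hE]; exact Int.toNat_of_nonneg (by omega)
          have : (E : ℤ) * 1 ≤ (E : ℤ) * b :=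
            mul_le_mul_of_nonneg_left (by omega) (by positivity)
          linarith
        obtain ⟨j', hj', hjc⟩ := psum_ivt n σ hn (m + i) j (n * E) (le_of_lt hlt) h2
        exact hne (j + j') (by omega) hjc
    have key : ∀ j : ℕ, psum n σ (L j % n) + (L j / n : ℕ) * b = m + j := by
      intro j
      have h := psum_add_mul n σ (L j % n) (L j / n)
      rw [Nat.mod_add_div (L j) n, ← hbdef] at h
      have h2 := hLspec j
      omega
    -- goodness of L i % n
    have hgood : ∀ i : ℕ, ∀ k ≤ n, psum n σ (L i % n) ≤ psum n σ (L i % n + k) := by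
      intro i k hk
      have hLi := key i
      rcases Nat.eq_zero_or_pos k with rfl | hk0
      · simp
      · have h1 : psum n σ (L i % n + k) + (L i / n : ℕ) * b = psum n σ (L i + k) := by
          have h := psum_add_mul n σ (L i % n + k) (L i / n)
          rw [← hbdef] at h
          have hd := Nat.mod_add_div (L i) n
          rw [show L i % n + k + n * (L i / n) = L i + k by omega] at h
          omega
        have h2 : m + i < psum n σ (L i + k) := hgt i (L i + k) (by omega)
        omega
    -- injectivity
    have hinj : ∀ i ∈ Finset.range b.toNat, ∀ i' ∈ Finset.range b.toNat,
        L i % n = L i' % n → i = i' := by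
      intro i hi i' hi' heq
      rw [Finset.mem_range] at hi hi'
      have k1 := key i
      have k2 := key i'
      rw [heq] at k1
      have hdvd : (i' : ℤ) - i = b * (((L i' / n : ℕ) : ℤ) - ((L i / n : ℕ) : ℤ)) := by
        push_cast at k1 k2 ⊢
        ring_nf
        ring_nf at k1 k2
        linarith
      by_contra hne
      have habs : b ∣ ((i' : ℤ) - i) := ⟨_, hdvd⟩
      rcases lt_trichotomy i i' with h | h | h
      · have := Int.le_of_dvd (by omega) habs
        omega
      · omega
      · have habs2 : b ∣ ((i : ℤ) - i') := by
          rw [show (i : ℤ) - i' = -((i' : ℤ) - i) by ring]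
          exact habs.neg_right
        have := Int.le_of_dvd (by omega) habs2
        omega
    have hcard : (Finset.range b.toNat).card = b.toNat := by simp
    rw [← hcard]
    refine Finset.card_le_card_of_injOn (fun i => L i % n) ?_ hinj
    intro i _
    refine Finset.mem_filter.mpr ⟨Finset.mem_range.mpr (Nat.mod_lt _ hn), ?_⟩
    exact hgood i

end Core

section Rot

def rot (n : ℕ) (r : ℕ) (σ : Fin n → Bool) : Fin n → Bool :=
  fun i => σ ⟨((i : ℕ) + r) % n, Nat.mod_lt _ i.pos⟩

lemma stepf_rot (n : ℕ) (hn : 0 < n) (r : ℕ) (σ : Fin n → Bool) (l : ℕ) :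
    stepf n (rot n r σ) l = stepf n σ (l + r) := by
  simp only [stepf, dif_pos hn, rot]
  have hmod : ((l % n : ℕ) + r) % n = (l + r) % n := Nat.mod_add_mod l n r
  have hfin : (⟨((l % n : ℕ) + r) % n, Nat.mod_lt _ hn⟩ : Fin n)
      = ⟨(l + r) % n, Nat.mod_lt _ hn⟩ := Fin.ext hmod
  exact congrArg (fun x : Fin n => if σ x then (1 : ℤ) else -1) hfin

lemma psum_rot (n : ℕ) (hn : 0 < n) (r : ℕ) (σ : Fin n → Bool) (k : ℕ) :
    psum n (rot n r σ) k = psum n σ (r + k) - psum n σ r := by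
  induction k with
  | zero => simp [psum]
  | succ k ih =>
      rw [psum_succ, ih, stepf_rot n hn, show r + (k + 1) = (r + k) + 1 by omega,
        psum_succ, show k + r = r + k by omega]
      ring

lemma rot_inj (n : ℕ) (r : ℕ) (σ σ' : Fin n → Bool)
    (h : rot n r σ = rot n r σ') : σ = σ' := by
  funext j
  have hn : 0 < n := j.pos
  set i : Fin n := ⟨((j : ℕ) + (n - r % n)) % n, Nat.mod_lt _ hn⟩ with hi
  have hkey : ((i : ℕ) + r) % n = (j : ℕ) := by
    have h1 : (((j : ℕ) + (n - r % n)) % n + r) % n = ((j : ℕ) + (n - r % n) + r) % n :=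
      Nat.mod_add_mod _ n r
    have h2 : (j : ℕ) + (n - r % n) + r = (j : ℕ) + (n - r % n) + r % n + n * (r / n) := by
      rw [Nat.add_assoc ((j : ℕ) + (n - r % n))]
      congr 1
      exact (Nat.mod_add_div r n).symm
    have h3 : r % n ≤ n := le_of_lt (Nat.mod_lt r hn)
    have h4 : (j : ℕ) + (n - r % n) + r % n = (j : ℕ) + n := by omega
    simp only [hi, h1, h2, h4]
    rw [show (j : ℕ) + n + n * (r / n) = (j : ℕ) + n * (1 + r / n) by ring,
      Nat.add_mul_mod_self_left]
    exact Nat.mod_eq_of_lt j.isLt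
  have := congrFun h i
  simp only [rot] at this
  have hj : (⟨((i : ℕ) + r) % n, Nat.mod_lt _ hn⟩ : Fin n) = j := Fin.ext hkey
  rwa [hj] at this

end Rot

section Counting

variable (n : ℕ) (α β : ℤ)

theorem main_count (hn : 0 < n) (hαβ : α ≤ β) :
    (max (β - α) 1).toNat *
      (Finset.univ.filter (fun σ : Fin n → Bool => pathPos n α σ n = β)).card
    ≤ n * (Finset.univ.filter (fun σ : Fin n → Bool =>
        pathPos n α σ n = β ∧ ∀ k ≤ n, min α β ≤ pathPos n α σ k)).card := by
  classical
  set P := Finset.univ.filter (fun σ : Fin n → Bool => pathPos n α σ n = β) with hP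
  set Q := Finset.univ.filter (fun σ : Fin n → Bool =>
      pathPos n α σ n = β ∧ ∀ k ≤ n, min α β ≤ pathPos n α σ k) with hQ
  set M := (max (β - α) 1).toNat with hM
  set S : Finset ((Fin n → Bool) × ℕ) := (P ×ˢ Finset.range n).filter
    (fun p => ∀ k ≤ n, psum n p.1 p.2 ≤ psum n p.1 (p.2 + k)) with hS
  have hend : ∀ σ : Fin n → Bool, σ ∈ P → psum n σ n = β - α := by
    intro σ hσ
    rw [hP, Finset.mem_filter] at hσ
    have := hσ.2
    rw [pathPos_eq n α σ n le_rfl] at this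
    omega
  -- lower bound
  have hlow : M * P.card ≤ S.card := by
    apply Finset.mul_card_image_le_card_of_maps_to (f := Prod.fst)
    · intro p hp
      rw [hS, Finset.mem_filter, Finset.mem_product] at hp
      exact hp.1.1
    · intro σ hσ
      have hcore := core_cycle n σ hn (by rw [hend σ hσ]; omega)
      rw [hend σ hσ] at hcore
      rw [← hM] at hcore
      refine le_trans hcore (Finset.card_le_card_of_injOn (fun r => (σ, r)) ?_ ?_)
      · intro r hr
        rw [Finset.mem_coe, Finset.mem_filter] at hr ⊢
        refine ⟨?_, rfl⟩
        rw [hS, Finset.mem_filter, Finset.mem_product]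
        exact ⟨⟨hσ, hr.1⟩, hr.2⟩
      · intro r _ r' _ h
        exact congrArg Prod.snd h
  -- upper bound
  have hup : S.card ≤ n * Q.card := by
    apply Finset.card_le_mul_card_image_of_maps_to (f := fun p => rot n p.2 p.1)
    · intro p hp
      rw [hS, Finset.mem_filter, Finset.mem_product] at hp
      obtain ⟨⟨hp1, _⟩, hgood⟩ := hp
      have hb := hend p.1 hp1
      rw [hQ, Finset.mem_filter]
      refine ⟨Finset.mem_univ _, ?_, ?_⟩
      · rw [pathPos_eq n α _ n le_rfl, psum_rot n hn, psum_add_n, hb]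
        ring
      · intro k hk
        rw [pathPos_eq n α _ k hk, psum_rot n hn, min_eq_left hαβ]
        have := hgood k hk
        omega
    · intro τ _
      refine le_trans
        (Finset.card_le_card_of_injOn (fun p : (Fin n → Bool) × ℕ => p.2) ?_ ?_)
        (le_of_eq (Finset.card_range n))
      · intro p hp
        rw [Finset.mem_coe, Finset.mem_filter, hS, Finset.mem_filter, Finset.mem_product] at hp
        exact hp.1.1.2
      · intro p hp p' hp' h
        rw [Finset.mem_coe, Finset.mem_filter] at hp hp'
        have h2 : p.2 = p'.2 := h
        have heq : rot n p.2 p.1 = rot n p.2 p'.1 := by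
          rw [hp.2, h2, hp'.2]
        have h1 := rot_inj n p.2 p.1 p'.1 heq
        exact Prod.ext h1 h2
  omega

end Counting

section Rev

def revp (n : ℕ) (σ : Fin n → Bool) : Fin n → Bool := fun i => ! σ i.rev

lemma revp_revp (n : ℕ) (σ : Fin n → Bool) : revp n (revp n σ) = σ := by
  funext i
  simp [revp, Fin.rev_rev]

lemma pathPos_zero (n : ℕ) (α : ℤ) (σ : Fin n → Bool) : pathPos n α σ 0 = α := by
  simp [pathPos]

lemma stepf_revp (n : ℕ) (hn : 0 < n) (σ : Fin n → Bool) (l : ℕ) (hl : l < n) :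
    stepf n (revp n σ) l = - stepf n σ (n - 1 - l) := by
  simp only [stepf, dif_pos hn, revp]
  have h1 : l % n = l := Nat.mod_eq_of_lt hl
  have h2 : (n - 1 - l) % n = n - 1 - l := Nat.mod_eq_of_lt (by omega)
  have h3 : (⟨l % n, Nat.mod_lt _ hn⟩ : Fin n).rev = ⟨(n - 1 - l) % n, Nat.mod_lt _ hn⟩ := by
    apply Fin.ext
    simp [Fin.val_rev, h1, h2]
    omega
  have h4 := congrArg σ h3
  simp only [h4]
  by_cases hσ : σ ⟨(n - 1 - l) % n, Nat.mod_lt _ hn⟩ <;> simp [hσ]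

lemma psum_revp (n : ℕ) (hn : 0 < n) (σ : Fin n → Bool) (k : ℕ) (hk : k ≤ n) :
    psum n (revp n σ) k = psum n σ (n - k) - psum n σ n := by
  induction k with
  | zero => simp [psum]
  | succ k ih =>
      have hk' : k ≤ n := by omega
      rw [psum_succ, ih hk', stepf_revp n hn σ k (by omega)]
      have h1 : n - k = (n - 1 - k) + 1 := by omega
      have h2 : n - (k + 1) = n - 1 - k := by omega
      rw [h1, psum_succ, h2]
      ring

lemma pathPos_revp (n : ℕ) (hn : 0 < n) (α β : ℤ) (σ : Fin n → Bool)
    (hσ : pathPos n α σ n = β) (k : ℕ) (hk : k ≤ n) :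
    pathPos n β (revp n σ) k = pathPos n α σ (n - k) := by
  have hend : psum n σ n = β - α := by
    rw [pathPos_eq n α σ n le_rfl] at hσ; omega
  rw [pathPos_eq n β _ k hk, pathPos_eq n α σ (n - k) (by omega),
    psum_revp n hn σ k hk, hend]
  ring

lemma card_swap_end (n : ℕ) (hn : 0 < n) (α β : ℤ) :
    (Finset.univ.filter (fun σ : Fin n → Bool => pathPos n α σ n = β)).card
    = (Finset.univ.filter (fun σ : Fin n → Bool => pathPos n β σ n = α)).card := by
  apply Finset.card_bij' (fun σ _ => revp n σ) (fun σ _ => revp n σ)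
  · intro σ hσ
    rw [Finset.mem_filter] at hσ ⊢
    refine ⟨Finset.mem_univ _, ?_⟩
    rw [pathPos_revp n hn α β σ hσ.2 n le_rfl]
    simp [pathPos_zero]
  · intro σ hσ
    rw [Finset.mem_filter] at hσ ⊢
    refine ⟨Finset.mem_univ _, ?_⟩
    rw [pathPos_revp n hn β α σ hσ.2 n le_rfl]
    simp [pathPos_zero]
  · intro σ _; exact revp_revp n σ
  · intro σ _; exact revp_revp n σ

lemma card_swap_full (n : ℕ) (hn : 0 < n) (α β : ℤ) :
    (Finset.univ.filter (fun σ : Fin n → Bool =>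
        pathPos n α σ n = β ∧ ∀ k ≤ n, min α β ≤ pathPos n α σ k)).card
    = (Finset.univ.filter (fun σ : Fin n → Bool =>
        pathPos n β σ n = α ∧ ∀ k ≤ n, min β α ≤ pathPos n β σ k)).card := by
  apply Finset.card_bij' (fun σ _ => revp n σ) (fun σ _ => revp n σ)
  · intro σ hσ
    rw [Finset.mem_filter] at hσ ⊢
    obtain ⟨_, hend, hmin⟩ := hσ
    have hend' : pathPos n β (revp n σ) n = α := by
      rw [pathPos_revp n hn α β σ hend n le_rfl]
      simp [pathPos_zero]
    refine ⟨Finset.mem_univ _, hend', ?_⟩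
    intro k hk
    rw [pathPos_revp n hn α β σ hend k hk, min_comm]
    exact hmin (n - k) (by omega)
  · intro σ hσ
    rw [Finset.mem_filter] at hσ ⊢
    obtain ⟨_, hend, hmin⟩ := hσ
    have hend' : pathPos n α (revp n σ) n = β := by
      rw [pathPos_revp n hn β α σ hend n le_rfl]
      simp [pathPos_zero]
    refine ⟨Finset.mem_univ _, hend', ?_⟩
    intro k hk
    rw [pathPos_revp n hn β α σ hend k hk, min_comm]
    exact hmin (n - k) (by omega)
  · intro σ _; exact revp_revp n σ
  · intro σ _; exact revp_revp n σ

end Rev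

lemma real_core (n : ℕ) (hn : 1 ≤ n) (α β : ℤ) (hαβ : α ≤ β) :
    (((Finset.univ.filter (fun σ : Fin n → Bool =>
        pathPos n α σ n = β ∧ ∀ k ≤ n, min α β ≤ pathPos n α σ k)).card : ℝ))
      ≥ ((max |α - β| 1 : ℤ) : ℝ) / n *
        ((Finset.univ.filter (fun σ : Fin n → Bool => pathPos n α σ n = β)).card : ℝ) := by
  have h := main_count n α β (by omega) hαβ
  have habs : |α - β| = β - α := by rw [abs_sub_comm]; exact abs_of_nonneg (by omega)
  have hM : ((max |α - β| 1 : ℤ) : ℝ) = ((max (β - α) 1).toNat : ℝ) := by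
    rw [habs]
    have := Int.toNat_of_nonneg (show (0 : ℤ) ≤ max (β - α) 1 by
      exact le_trans zero_le_one (le_max_right _ _))
    rw [show ((max (β - α) 1 : ℤ) : ℝ) = (((max (β - α) 1).toNat : ℤ) : ℝ) by rw [this]]
    push_cast
    ring
  rw [ge_iff_le, hM, div_mul_eq_mul_div, div_le_iff₀ (by positivity)]
  have hcast : (((max (β - α) 1).toNat : ℝ)) *
      ((Finset.univ.filter (fun σ : Fin n → Bool => pathPos n α σ n = β)).card : ℝ)
      ≤ (n : ℝ) * ((Finset.univ.filter (fun σ : Fin n → Bool =>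
        pathPos n α σ n = β ∧ ∀ k ≤ n, min α β ≤ pathPos n α σ k)).card : ℝ) := by
    exact_mod_cast h
  linarith

theorem stmt11 (n : ℕ) (hn : 1 ≤ n) (α β : ℤ) :
    (((Finset.univ.filter (fun σ : Fin n → Bool =>
        pathPos n α σ n = β ∧ ∀ k ≤ n, min α β ≤ pathPos n α σ k)).card : ℝ))
      ≥ ((max |α - β| 1 : ℤ) : ℝ) / n *
        ((Finset.univ.filter (fun σ : Fin n → Bool => pathPos n α σ n = β)).card : ℝ) := by
  rcases le_total α β with h | h
  · exact real_core n hn α β h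
  · rw [card_swap_full n (by omega) α β, card_swap_end n (by omega) α β, abs_sub_comm α β]
    exact real_core n hn β α h
end

section
/- Let d ≥ 1, λ ∈ (0,1), and let (Z_n) be the drifted random walk on ℤ^d starting at 0 that moves by +e_i with probability 1/(d(1+λ)) and by −e_i with probability λ/(d(1+λ)) for each coordinate i. Then for every k = (k_1,…,k_d) ∈ ℤ^d and every choice of signs ε ∈ {−1,1}^d, P(Z_n = k) = λ^{∑_{i=1}^d (ε_i − 1)k_i/2} · P(Z_n = (ε_1 k_1,…, ε_d k_d)). -/
/-- The step `±e_i` of the drifted random walk on `ℤ^d`. -/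
def stepVec (d : ℕ) (i : Fin d) (b : Bool) : Fin d → ℤ :=
  fun j => if j = i then (if b then 1 else -1) else 0

/-- Probability of a step: `+e_i` with probability `1/(d(1+λ))`,
`-e_i` with probability `λ/(d(1+λ))`. -/
noncomputable def stepProb (d : ℕ) (lam : ℝ) (b : Bool) : ℝ :=
  if b then 1 / (d * (1 + lam)) else lam / (d * (1 + lam))

open scoped Classical in
/-- `P(Z_n = k | Z_0 = 0)` for the drifted random walk, written as a sum
over step sequences. -/
noncomputable def ZProb (d : ℕ) (lam : ℝ) (n : ℕ) (k : Fin d → ℤ) : ℝ :=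
  ∑ ω : Fin n → Fin d × Bool,
    (∏ j, stepProb d lam (ω j).2) *
      (if (∑ j, stepVec d (ω j).1 (ω j).2) = k then 1 else 0)

private lemma prod_zpow_aux {α : Type*} (x : ℝ) (hx : x ≠ 0) (s : Finset α) (f : α → ℤ) :
    ∏ a ∈ s, x ^ f a = x ^ (∑ a ∈ s, f a) := by
  induction s using Finset.cons_induction with
  | empty => simp
  | cons a s ha ih => rw [Finset.prod_cons, Finset.sum_cons, ih, zpow_add₀ hx]

theorem stmt12 (d : ℕ) (hd : 1 ≤ d) (lam : ℝ) (h0 : 0 < lam) (h1 : lam < 1)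
    (n : ℕ) (k : Fin d → ℤ) (ε : Fin d → ℤ) (hε : ∀ i, ε i = 1 ∨ ε i = -1) :
    ZProb d lam n k
      = lam ^ ((∑ i, (ε i - 1) * k i) / 2) * ZProb d lam n (fun i => ε i * k i) := by
  classical
  have hlam : lam ≠ 0 := ne_of_gt h0
  have hεne : ∀ i, ε i ≠ 0 := by intro i; rcases hε i with h | h <;> simp [h]
  set T : ℤ := ∑ i, (if ε i = 1 then 0 else -(k i)) with hT
  have hE : (∑ i, (ε i - 1) * k i) / 2 = T := by
    have h2 : (∑ i, (ε i - 1) * k i) = 2 * T := by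
      rw [hT, Finset.mul_sum]
      apply Finset.sum_congr rfl
      intro i _
      rcases hε i with h | h <;> rw [h] <;> simp <;> ring
    rw [h2, Int.mul_ediv_cancel_left _ (by norm_num)]
  rw [hE]
  set F : (Fin n → Fin d × Bool) → (Fin n → Fin d × Bool) :=
    fun ω j => ((ω j).1, if ε (ω j).1 = 1 then (ω j).2 else !(ω j).2) with hF
  have hFinv : Function.Involutive F := by
    intro ω; funext j
    simp only [hF]
    by_cases h : ε (ω j).1 = 1 <;> simp [h]
  have key : ∀ ω : Fin n → Fin d × Bool,
      (∏ j, stepProb d lam (ω j).2) *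
        (if (∑ j, stepVec d (ω j).1 (ω j).2) = k then 1 else 0)
      = lam ^ T * ((∏ j, stepProb d lam ((F ω) j).2) *
        (if (∑ j, stepVec d ((F ω) j).1 ((F ω) j).2) = (fun i => ε i * k i) then 1 else 0)) := by
    intro ω
    have hA : (∑ j, stepVec d ((F ω) j).1 ((F ω) j).2)
        = fun i => ε i * (∑ j, stepVec d (ω j).1 (ω j).2) i := by
      funext i
      rw [Finset.sum_apply, Finset.sum_apply, Finset.mul_sum]
      apply Finset.sum_congr rfl
      intro j _
      simp only [hF, stepVec]
      by_cases hij : i = (ω j).1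
      · rcases hε (ω j).1 with h | h <;>
          rcases Bool.eq_false_or_eq_true (ω j).2 with hb | hb <;>
          simp [hij, h, hb]
      · simp [hij]
    have hB : ((∑ j, stepVec d ((F ω) j).1 ((F ω) j).2) = (fun i => ε i * k i))
        ↔ ((∑ j, stepVec d (ω j).1 (ω j).2) = k) := by
      rw [hA]
      constructor
      · intro h
        funext i
        have := congrFun h i
        exact mul_left_cancel₀ (hεne i) this
      · intro h; rw [h]
    by_cases hk : (∑ j, stepVec d (ω j).1 (ω j).2) = k
    · -- weights
      set s : Fin n → ℤ := fun j => if ε (ω j).1 = 1 then 0 else (if (ω j).2 then 1 else -1)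
        with hs
      have hw : ∀ j, stepProb d lam ((F ω) j).2 = stepProb d lam ((ω) j).2 * lam ^ (s j) := by
        intro j
        simp only [hF, hs, stepProb]
        by_cases h : ε (ω j).1 = 1
        · simp [h]
        · rcases Bool.eq_false_or_eq_true (ω j).2 with hb | hb <;>
            simp [h, hb] <;> field_simp <;> first | (left; ring) | ring
      have hsum : ∑ j, s j = -T := by
        have hsj : ∀ j, s j = ∑ i, (if ε i = 1 then 0 else stepVec d (ω j).1 (ω j).2 i) := by
          intro j
          rw [Finset.sum_eq_single_of_mem (ω j).1 (Finset.mem_univ _)]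
          · simp [hs, stepVec]
          · intro i _ hne
            simp [stepVec, hne]
        rw [Finset.sum_congr rfl (fun j _ => hsj j), Finset.sum_comm]
        have : ∀ i : Fin d, ∑ j, (if ε i = 1 then 0 else stepVec d (ω j).1 (ω j).2 i)
            = (if ε i = 1 then 0 else k i) := by
          intro i
          by_cases h : ε i = 1
          · simp [h]
          · simp only [h, if_false]
            have := congrFun hk i
            rw [Finset.sum_apply] at this
            exact this
        rw [Finset.sum_congr rfl (fun i _ => this i), hT, ← Finset.sum_neg_distrib]
        apply Finset.sum_congr rfl
        intro i _
        by_cases h : ε i = 1 <;> simp [h]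
      have hprod : (∏ j, stepProb d lam ((F ω) j).2)
          = (∏ j, stepProb d lam (ω j).2) * lam ^ (-T) := by
        rw [Finset.prod_congr rfl (fun j _ => hw j), Finset.prod_mul_distrib,
          prod_zpow_aux lam hlam, hsum]
      rw [hprod, if_pos hk, if_pos (hB.mpr hk)]
      rw [mul_one, mul_one]
      rw [show lam ^ T * ((∏ j, stepProb d lam (ω j).2) * lam ^ (-T))
        = (∏ j, stepProb d lam (ω j).2) * (lam ^ T * lam ^ (-T)) by ring]
      rw [← zpow_add₀ hlam]
      simp
    · rw [if_neg hk, if_neg (fun h => hk (hB.mp h))]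
      ring
  rw [ZProb, ZProb]
  have hre : (∑ ω : Fin n → Fin d × Bool, (∏ j, stepProb d lam ((F ω) j).2) *
        (if (∑ j, stepVec d ((F ω) j).1 ((F ω) j).2) = (fun i => ε i * k i) then 1 else 0))
      = ∑ ω : Fin n → Fin d × Bool, (∏ j, stepProb d lam (ω j).2) *
        (if (∑ j, stepVec d (ω j).1 (ω j).2) = (fun i => ε i * k i) then 1 else 0) :=
    Fintype.sum_bijective F hFinv.bijective _ _ (fun ω => rfl)
  rw [← hre, Finset.mul_sum]
  exact Finset.sum_congr rfl (fun ω _ => key ω)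
end

section
/- Let d ≥ 1 and λ ∈ [0,1). Let (X_n) be the biased random walk RW_λ on ℤ^d with transition probabilities p(v,u) = λ/(d_v + (λ−1)d_v^−) if |u| = |v|−1 and v ≠ 0, p(v,u) = 1/(d_v + (λ−1)d_v^−) if |u| = |v|+1 or (|u| = |v|), and p(0,u) = 1/(2d), where d_v = 2d and d_v^− = d − #{i : v_i = 0}. Then for every nearest-neighbor path γ = γ_0γ_1⋯γ_n from 0 to k ∈ ℤ^d, the path probability p(γ) = ∏_{j} p(γ_{j−1}, γ_j) satisfies p(γ) ≤ (1/(d(1+λ)))^{(n+|k|)/2} · (λ/(d(1+λ)))^{(n−|k|)/2}. -/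
open scoped Classical in
/-- Transition probability of the biased random walk `RW_λ` on `ℤ^d`
(for nearest-neighbor pairs `v`, `u`): `λ/(2d+(λ-1)d_v^-)` for steps
decreasing the ℓ¹ norm, `1/(2d+(λ-1)d_v^-)` otherwise, where
`d_v^- = d - #{i : v_i = 0}`. -/
noncomputable def ptrans (d : ℕ) (lam : ℝ) (v u : Fin d → ℤ) : ℝ :=
  if (∑ i, |u i|) < (∑ i, |v i|) then
    lam / (2 * d + (lam - 1) * ((d : ℝ) - (Finset.univ.filter (fun i => v i = 0)).card))
  else
    1 / (2 * d + (lam - 1) * ((d : ℝ) - (Finset.univ.filter (fun i => v i = 0)).card))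

lemma even_abs_sub (x : ℤ) : Even (|x| - x) := by
  rcases abs_choice x with h | h <;> rw [h]
  · simp
  · exact ⟨-x, by ring⟩

lemma step_pm (d : ℕ) (v u : Fin d → ℤ) (h : (∑ i, |u i - v i|) = 1) :
    (∑ i, |u i|) - (∑ i, |v i|) = 1 ∨ (∑ i, |u i|) - (∑ i, |v i|) = -1 := by
  have habs : |(∑ i, |u i|) - (∑ i, |v i|)| ≤ 1 := by
    calc |(∑ i, |u i|) - (∑ i, |v i|)| = |∑ i, (|u i| - |v i|)| := by
          rw [Finset.sum_sub_distrib]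
      _ ≤ ∑ i, |(|u i| - |v i|)| := Finset.abs_sum_le_sum_abs _ _
      _ ≤ ∑ i, |u i - v i| := Finset.sum_le_sum (fun i _ => abs_abs_sub_abs_le_abs_sub _ _)
      _ = 1 := h
  have h1 : Even ((∑ i, |u i|) - ∑ i, u i) := by
    rw [← Finset.sum_sub_distrib]
    exact Finset.even_sum _ (fun i _ => even_abs_sub _)
  have h2 : Even ((∑ i, |v i|) - ∑ i, v i) := by
    rw [← Finset.sum_sub_distrib]
    exact Finset.even_sum _ (fun i _ => even_abs_sub _)
  have h3 : Even ((∑ i, |u i - v i|) - ∑ i, (u i - v i)) := by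
    rw [← Finset.sum_sub_distrib]
    exact Finset.even_sum _ (fun i _ => even_abs_sub _)
  have h4 : (∑ i, (u i - v i)) = (∑ i, u i) - ∑ i, v i := Finset.sum_sub_distrib _ _
  rw [h, h4] at h3
  obtain ⟨a, ha⟩ := h1
  obtain ⟨b, hb⟩ := h2
  obtain ⟨c, hc⟩ := h3
  have := abs_le.mp habs
  omega

theorem stmt14 (d : ℕ) (hd : 1 ≤ d) (lam : ℝ) (h0 : 0 ≤ lam) (h1 : lam < 1)
    (n : ℕ) (k : Fin d → ℤ) (γ : ℕ → Fin d → ℤ)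
    (hstart : γ 0 = 0) (hend : γ n = k)
    (hstep : ∀ j < n, (∑ i, |γ (j + 1) i - γ j i|) = 1)
    (m₁ m₂ : ℕ) (hm : m₁ + m₂ = n) (hk : (m₁ : ℤ) = (m₂ : ℤ) + ∑ i, |k i|) :
    (∏ j ∈ Finset.range n, ptrans d lam (γ j) (γ (j + 1)))
      ≤ (1 / (d * (1 + lam))) ^ m₁ * (lam / (d * (1 + lam))) ^ m₂ := by
  classical
  have hd1 : (1 : ℝ) ≤ d := by exact_mod_cast hd
  have hpos : (0 : ℝ) < d * (1 + lam) := by nlinarith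
  -- denominator bound
  have hden : ∀ v : Fin d → ℤ,
      (d : ℝ) * (1 + lam)
        ≤ 2 * d + (lam - 1) * ((d : ℝ) - (Finset.univ.filter (fun i => v i = 0)).card) := by
    intro v
    have hc : ((Finset.univ.filter (fun i => v i = 0)).card : ℝ) ≤ d := by
      have := Finset.card_filter_le (Finset.univ : Finset (Fin d)) (fun i => v i = 0)
      have hcard : (Finset.univ : Finset (Fin d)).card = d := by simp
      exact_mod_cast hcard ▸ this
    have hc0 : (0 : ℝ) ≤ ((Finset.univ.filter (fun i => v i = 0)).card : ℝ) := by positivity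
    nlinarith
  have hdenpos : ∀ v : Fin d → ℤ,
      (0 : ℝ) < 2 * d + (lam - 1) * ((d : ℝ) - (Finset.univ.filter (fun i => v i = 0)).card) :=
    fun v => lt_of_lt_of_le hpos (hden v)
  have hnn : ∀ v u : Fin d → ℤ, 0 ≤ ptrans d lam v u := by
    intro v u
    unfold ptrans
    split
    · exact div_nonneg h0 (hdenpos v).le
    · exact div_nonneg zero_le_one (hdenpos v).le
  have hA : ∀ v u : Fin d → ℤ, (∑ i, |u i|) < (∑ i, |v i|) →
      ptrans d lam v u ≤ lam / (d * (1 + lam)) := by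
    intro v u h
    unfold ptrans
    rw [if_pos h]
    exact div_le_div_of_nonneg_left h0 hpos (hden v)
  have hB : ∀ v u : Fin d → ℤ, ¬ ((∑ i, |u i|) < (∑ i, |v i|)) →
      ptrans d lam v u ≤ 1 / (d * (1 + lam)) := by
    intro v u h
    unfold ptrans
    rw [if_neg h]
    exact div_le_div_of_nonneg_left zero_le_one hpos (hden v)
  set S : ℕ → ℤ := fun j => ∑ i, |γ j i| with hSdef
  have hstepS : ∀ j < n, S (j + 1) - S j = 1 ∨ S (j + 1) - S j = -1 :=
    fun j hj => step_pm d (γ j) (γ (j + 1)) (hstep j hj)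
  set A := (Finset.range n).filter (fun j => S (j + 1) < S j) with hAdef
  set B := (Finset.range n).filter (fun j => ¬ S (j + 1) < S j) with hBdef
  have hcardAB : A.card + B.card = n := by
    have := Finset.card_filter_add_card_filter_not
      (s := Finset.range n) (p := fun j => S (j + 1) < S j)
    simpa [hAdef, hBdef] using this
  have htel : ∑ j ∈ Finset.range n, (S (j + 1) - S j) = S n - S 0 :=
    Finset.sum_range_sub S n
  have hS0 : S 0 = 0 := by simp [hSdef, hstart]
  have hSn : S n = ∑ i, |k i| := by simp [hSdef, hend]
  have hsplit : (∑ j ∈ A, (S (j + 1) - S j)) + (∑ j ∈ B, (S (j + 1) - S j))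
      = ∑ j ∈ Finset.range n, (S (j + 1) - S j) :=
    Finset.sum_filter_add_sum_filter_not _ _ _
  have hsumA : (∑ j ∈ A, (S (j + 1) - S j)) = -(A.card : ℤ) := by
    have h : ∀ j ∈ A, S (j + 1) - S j = (-1 : ℤ) := by
      intro j hj
      rw [hAdef, Finset.mem_filter, Finset.mem_range] at hj
      rcases hstepS j hj.1 with h | h <;> omega
    rw [Finset.sum_congr rfl h, Finset.sum_const]
    simp
  have hsumB : (∑ j ∈ B, (S (j + 1) - S j)) = (B.card : ℤ) := by
    have h : ∀ j ∈ B, S (j + 1) - S j = (1 : ℤ) := by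
      intro j hj
      rw [hBdef, Finset.mem_filter, Finset.mem_range] at hj
      rcases hstepS j hj.1 with h | h <;> omega
    rw [Finset.sum_congr rfl h, Finset.sum_const]
    simp
  have hdiff : (B.card : ℤ) - (A.card : ℤ) = ∑ i, |k i| := by
    have := hsplit
    rw [hsumA, hsumB, htel, hS0, hSn] at this
    omega
  have hm1 : m₁ = B.card := by omega
  have hm2 : m₂ = A.card := by omega
  have hprodA : (∏ j ∈ A, ptrans d lam (γ j) (γ (j + 1)))
      ≤ (lam / (d * (1 + lam))) ^ A.card := by
    rw [← Finset.prod_const]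
    refine Finset.prod_le_prod (fun j _ => hnn _ _) (fun j hj => ?_)
    rw [hAdef, Finset.mem_filter] at hj
    exact hA _ _ hj.2
  have hprodB : (∏ j ∈ B, ptrans d lam (γ j) (γ (j + 1)))
      ≤ (1 / (d * (1 + lam))) ^ B.card := by
    rw [← Finset.prod_const]
    refine Finset.prod_le_prod (fun j _ => hnn _ _) (fun j hj => ?_)
    rw [hBdef, Finset.mem_filter] at hj
    exact hB _ _ hj.2
  have hprodsplit : (∏ j ∈ A, ptrans d lam (γ j) (γ (j + 1)))
      * (∏ j ∈ B, ptrans d lam (γ j) (γ (j + 1)))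
      = ∏ j ∈ Finset.range n, ptrans d lam (γ j) (γ (j + 1)) :=
    Finset.prod_filter_mul_prod_filter_not _ _ _
  rw [← hprodsplit, hm1, hm2, mul_comm ((1 / (d * (1 + lam))) ^ B.card)]
  exact mul_le_mul hprodA hprodB (Finset.prod_nonneg (fun j _ => hnn _ _))
    (pow_nonneg (div_nonneg h0 hpos.le) _)
end
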